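/- Let X be a normed space, T : X → X nonexpansive with fixed point p, f : X → X a ρ-contraction (ρ ∈ [0,1)), and (x_n) defined by x_{n+1} = δ_n f(x_n) + (1 − δ_n) T x_n where δ_n ∈ [0,1]. Assume ∑|δ_n − δ_{n+1}| < ∞, lim δ_n = 0, and ∑ δ_n = ∞. Then lim ‖x_{n+1} − x_n‖ = 0 and lim ‖x_n − T x_n‖ = 0. -/

import Mathlib

open Filter Finset

lemma lemA (a b γ : ℕ → ℝ) (ha : ∀ n, 0 ≤ a n) (hb : ∀ n, 0 ≤ b n)
    (hγ0 : ∀ n, 0 ≤ γ n) (hγ1 : ∀ n, γ n ≤ 1)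
    (hrec : ∀ n, a (n + 1) ≤ (1 - γ n) * a n + b n)
    (hbs : Summable b) (hγd : ¬ Summable γ) :
    Tendsto a atTop (nhds 0) := by
  have hkey : ∀ n m, n ≤ m →
      a m ≤ (∏ k ∈ Finset.Ico n m, (1 - γ k)) * a n + ∑ k ∈ Finset.Ico n m, b k := by
    intro n m hnm
    induction m, hnm using Nat.le_induction with
    | base => simp
    | succ m hnm ih =>
      have h1 : 0 ≤ 1 - γ m := by linarith [hγ1 m]
      have hP : 0 ≤ ∏ k ∈ Finset.Ico n m, (1 - γ k) :=
        Finset.prod_nonneg fun k _ => by linarith [hγ1 k]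
      have hS : 0 ≤ ∑ k ∈ Finset.Ico n m, b k := Finset.sum_nonneg fun k _ => hb k
      calc a (m + 1) ≤ (1 - γ m) * a m + b m := hrec m
        _ ≤ (1 - γ m) * ((∏ k ∈ Finset.Ico n m, (1 - γ k)) * a n
              + ∑ k ∈ Finset.Ico n m, b k) + b m := by
            nlinarith [mul_le_mul_of_nonneg_left ih h1]
        _ ≤ (∏ k ∈ Finset.Ico n (m + 1), (1 - γ k)) * a n
              + ∑ k ∈ Finset.Ico n (m + 1), b k := by
            rw [Finset.prod_Ico_succ_top hnm, Finset.sum_Ico_succ_top hnm]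
            nlinarith [mul_nonneg hP (ha n), hγ0 m]
  -- partial sums of γ tend to infinity
  have hG : Tendsto (fun m => ∑ k ∈ Finset.range m, γ k) atTop atTop :=
    (not_summable_iff_tendsto_nat_atTop_of_nonneg hγ0).mp hγd
  rw [Metric.tendsto_atTop]
  intro ε hε
  -- tail sums of b small
  obtain ⟨s, hs⟩ := (summable_iff_vanishing.mp hbs) (Metric.ball 0 (ε/2))
    (Metric.ball_mem_nhds 0 (by linarith))
  obtain ⟨N, hN⟩ := s.exists_nat_subset_range
  have htail : ∀ m, N ≤ m → ∑ k ∈ Finset.Ico N m, b k < ε / 2 := by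
    intro m hm
    have hdisj : Disjoint (Finset.Ico N m) s := by
      refine Finset.disjoint_left.mpr fun k hk hks => ?_
      have := Finset.mem_range.mp (hN hks)
      have := (Finset.mem_Ico.mp hk).1
      omega
    have := hs (Finset.Ico N m) hdisj
    rw [Metric.mem_ball, Real.dist_0_eq_abs] at this
    exact lt_of_le_of_lt (le_abs_self _) this
  -- product bound via exp
  have hprod : ∀ m, N ≤ m → (∏ k ∈ Finset.Ico N m, (1 - γ k)) ≤
      Real.exp (-(∑ k ∈ Finset.Ico N m, γ k)) := by
    intro m hm
    calc (∏ k ∈ Finset.Ico N m, (1 - γ k)) ≤ ∏ k ∈ Finset.Ico N m, Real.exp (-γ k) :=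
          Finset.prod_le_prod (fun k _ => by linarith [hγ1 k])
            (fun k _ => by linarith [Real.add_one_le_exp (-γ k)])
      _ = Real.exp (-(∑ k ∈ Finset.Ico N m, γ k)) := by
          rw [← Real.exp_sum]; congr 1; rw [Finset.sum_neg_distrib]
  -- exp part tends to 0
  have hexp : Tendsto (fun m => Real.exp (-(∑ k ∈ Finset.Ico N m, γ k)) * a N)
      atTop (nhds 0) := by
    have h1 : Tendsto (fun m => ∑ k ∈ Finset.Ico N m, γ k) atTop atTop := by
      have : ∀ m, N ≤ m → ∑ k ∈ Finset.Ico N m, γ k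
          = (∑ k ∈ Finset.range m, γ k) - ∑ k ∈ Finset.range N, γ k := by
        intro m hm
        rw [Finset.sum_Ico_eq_sub _ hm]
      refine Tendsto.congr' ?_ (hG.atTop_add (tendsto_const_nhds (x := -(∑ k ∈ Finset.range N, γ k))))
      filter_upwards [eventually_ge_atTop N] with m hm
      rw [this m hm]; ring
    have := (Real.tendsto_exp_atBot).comp (tendsto_neg_atBot_iff.mpr h1)
    simpa using this.mul_const (a N)
  have hev := (Metric.tendsto_atTop.mp hexp) (ε/2) (by linarith)
  obtain ⟨M0, hM0⟩ := hev
  refine ⟨max N M0, fun m hm => ?_⟩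
  have hmN : N ≤ m := le_trans (le_max_left _ _) hm
  have hmM : M0 ≤ m := le_trans (le_max_right _ _) hm
  have h1 := hkey N m hmN
  have h2 := htail m hmN
  have h3 := hprod m hmN
  have h4 := hM0 m hmM
  rw [Real.dist_0_eq_abs] at h4 ⊢
  rw [abs_of_nonneg (ha m)]
  have h5 : Real.exp (-(∑ k ∈ Finset.Ico N m, γ k)) * a N < ε / 2 :=
    lt_of_le_of_lt (le_abs_self _) h4
  have h6 : (∏ k ∈ Finset.Ico N m, (1 - γ k)) * a N ≤
      Real.exp (-(∑ k ∈ Finset.Ico N m, γ k)) * a N :=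
    mul_le_mul_of_nonneg_right h3 (ha N)
  linarith

theorem stmt_19 {X : Type*} [NormedAddCommGroup X] [NormedSpace ℝ X]
    (T f : X → X) (hT : ∀ x y, ‖T x - T y‖ ≤ ‖x - y‖)
    (ρ : ℝ) (hρ : 0 ≤ ρ) (hρ1 : ρ < 1)
    (hf : ∀ x y, ‖f x - f y‖ ≤ ρ * ‖x - y‖)
    (p : X) (hp : T p = p)
    (δ : ℕ → ℝ) (hδ : ∀ n, δ n ∈ Set.Icc (0:ℝ) 1)
    (x : ℕ → X)
    (hx : ∀ n, x (n + 1) = δ n • f (x n) + (1 - δ n) • T (x n))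
    (hδdiff : Summable (fun n => |δ n - δ (n + 1)|))
    (hδ0 : Filter.Tendsto δ Filter.atTop (nhds 0))
    (hδdiv : ¬ Summable δ) :
    Filter.Tendsto (fun n => ‖x (n + 1) - x n‖) Filter.atTop (nhds 0) ∧
    Filter.Tendsto (fun n => ‖x n - T (x n)‖) Filter.atTop (nhds 0) := by
  have hρ' : 0 < 1 - ρ := by linarith
  set M : ℝ := max ‖x 0 - p‖ (‖f p - p‖ / (1 - ρ)) with hMdef
  have hM0 : 0 ≤ M := le_trans (norm_nonneg _) (le_max_left _ _)
  have hfp : ‖f p - p‖ ≤ (1 - ρ) * M := by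
    have : ‖f p - p‖ / (1 - ρ) ≤ M := le_max_right _ _
    calc ‖f p - p‖ = (1 - ρ) * (‖f p - p‖ / (1 - ρ)) := by field_simp
      _ ≤ (1 - ρ) * M := by nlinarith
  -- boundedness
  have hM : ∀ n, ‖x n - p‖ ≤ M := by
    intro n
    induction n with
    | zero => exact le_max_left _ _
    | succ n ih =>
      obtain ⟨hδn0, hδn1⟩ := hδ n
      have hTb : ‖T (x n) - p‖ ≤ M := by
        calc ‖T (x n) - p‖ = ‖T (x n) - T p‖ := by rw [hp]
          _ ≤ ‖x n - p‖ := hT _ _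
          _ ≤ M := ih
      have hfb : ‖f (x n) - p‖ ≤ M := by
        calc ‖f (x n) - p‖ ≤ ‖f (x n) - f p‖ + ‖f p - p‖ := norm_sub_le_norm_sub_add_norm_sub _ _ _
          _ ≤ ρ * ‖x n - p‖ + (1 - ρ) * M := add_le_add (hf _ _) hfp
          _ ≤ ρ * M + (1 - ρ) * M := by nlinarith
          _ = M := by ring
      have heq : x (n + 1) - p = δ n • (f (x n) - p) + (1 - δ n) • (T (x n) - p) := by
        rw [hx n]; module
      calc ‖x (n + 1) - p‖ ≤ ‖δ n • (f (x n) - p)‖ + ‖(1 - δ n) • (T (x n) - p)‖ := by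
            rw [heq]; exact norm_add_le _ _
        _ = δ n * ‖f (x n) - p‖ + (1 - δ n) * ‖T (x n) - p‖ := by
            rw [norm_smul, norm_smul, Real.norm_eq_abs, Real.norm_eq_abs,
              abs_of_nonneg hδn0, abs_of_nonneg (by linarith)]
        _ ≤ δ n * M + (1 - δ n) * M := by
            apply add_le_add
            · exact mul_le_mul_of_nonneg_left hfb hδn0
            · exact mul_le_mul_of_nonneg_left hTb (by linarith)
        _ = M := by ring
  set C : ℝ := (1 + ρ) * M + ‖f p - p‖ with hCdef
  have hC0 : 0 ≤ C := by positivity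
  have hC : ∀ n, ‖f (x n) - T (x n)‖ ≤ C := by
    intro n
    have h1 : ‖f (x n) - f p‖ ≤ ρ * M := le_trans (hf _ _) (by nlinarith [hM n])
    have h2 : ‖p - T (x n)‖ ≤ M := by
      rw [← norm_neg, neg_sub]
      calc ‖T (x n) - p‖ = ‖T (x n) - T p‖ := by rw [hp]
        _ ≤ ‖x n - p‖ := hT _ _
        _ ≤ M := hM n
    calc ‖f (x n) - T (x n)‖ ≤ ‖f (x n) - f p‖ + ‖f p - p‖ + ‖p - T (x n)‖ := by
          have := norm_add₃_le (a := f (x n) - f p) (b := f p - p) (c := p - T (x n))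
          simpa using this
      _ ≤ ρ * M + ‖f p - p‖ + M := by linarith
      _ = C := by ring
  -- recursion for a n = ‖x (n+1) - x n‖
  have hrec : ∀ n, ‖x (n + 2) - x (n + 1)‖ ≤
      (1 - (1 - ρ) * δ (n + 1)) * ‖x (n + 1) - x n‖ + |δ (n + 1) - δ n| * C := by
    intro n
    obtain ⟨hδn0, hδn1⟩ := hδ (n + 1)
    have heq : x (n + 2) - x (n + 1) =
        δ (n + 1) • (f (x (n + 1)) - f (x n)) + (1 - δ (n + 1)) • (T (x (n + 1)) - T (x n))
          + (δ (n + 1) - δ n) • (f (x n) - T (x n)) := by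
      rw [hx (n + 1), hx n]; module
    calc ‖x (n + 2) - x (n + 1)‖
        ≤ ‖δ (n + 1) • (f (x (n + 1)) - f (x n))‖
          + ‖(1 - δ (n + 1)) • (T (x (n + 1)) - T (x n))‖
          + ‖(δ (n + 1) - δ n) • (f (x n) - T (x n))‖ := by
          rw [heq]; exact norm_add₃_le
      _ = δ (n + 1) * ‖f (x (n + 1)) - f (x n)‖
          + (1 - δ (n + 1)) * ‖T (x (n + 1)) - T (x n)‖
          + |δ (n + 1) - δ n| * ‖f (x n) - T (x n)‖ := by
          rw [norm_smul, norm_smul, norm_smul, Real.norm_eq_abs, Real.norm_eq_abs,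
            Real.norm_eq_abs, abs_of_nonneg hδn0, abs_of_nonneg (by linarith)]
      _ ≤ δ (n + 1) * (ρ * ‖x (n + 1) - x n‖)
          + (1 - δ (n + 1)) * ‖x (n + 1) - x n‖
          + |δ (n + 1) - δ n| * C := by
          refine add_le_add (add_le_add ?_ ?_) ?_
          · exact mul_le_mul_of_nonneg_left (hf _ _) hδn0
          · exact mul_le_mul_of_nonneg_left (hT _ _) (by linarith)
          · exact mul_le_mul_of_nonneg_left (hC n) (abs_nonneg _)
      _ = (1 - (1 - ρ) * δ (n + 1)) * ‖x (n + 1) - x n‖ + |δ (n + 1) - δ n| * C := by ring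
  -- apply lemA
  have hbs : Summable (fun n => |δ (n + 1) - δ n| * C) := by
    have : (fun n => |δ (n + 1) - δ n| * C) = fun n => |δ n - δ (n + 1)| * C := by
      funext n; rw [abs_sub_comm]
    rw [this]
    exact hδdiff.mul_right C
  have hγd : ¬ Summable (fun n => (1 - ρ) * δ (n + 1)) := by
    intro h
    have h1 : Summable (fun n => δ (n + 1)) := by
      have h2 := h.mul_left (1 - ρ)⁻¹
      refine h2.congr fun n => ?_
      field_simp
    exact hδdiv ((summable_nat_add_iff 1).mp h1)
  have h1 : Tendsto (fun n => ‖x (n + 1) - x n‖) atTop (nhds 0) := by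
    apply lemA (fun n => ‖x (n + 1) - x n‖) (fun n => |δ (n + 1) - δ n| * C)
      (fun n => (1 - ρ) * δ (n + 1))
    · exact fun n => norm_nonneg _
    · exact fun n => mul_nonneg (abs_nonneg _) hC0
    · exact fun n => mul_nonneg (by linarith) (hδ (n + 1)).1
    · intro n
      obtain ⟨h0, h1⟩ := hδ (n + 1)
      nlinarith
    · exact hrec
    · exact hbs
    · exact hγd
  refine ⟨h1, ?_⟩
  have hbound : ∀ n, ‖x n - T (x n)‖ ≤ ‖x (n + 1) - x n‖ + δ n * C := by
    intro n
    have heq : x (n + 1) - T (x n) = δ n • (f (x n) - T (x n)) := by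
      rw [hx n]; module
    calc ‖x n - T (x n)‖ ≤ ‖x n - x (n + 1)‖ + ‖x (n + 1) - T (x n)‖ :=
          norm_sub_le_norm_sub_add_norm_sub _ _ _
      _ = ‖x (n + 1) - x n‖ + ‖δ n • (f (x n) - T (x n))‖ := by
          rw [norm_sub_rev, heq]
      _ ≤ ‖x (n + 1) - x n‖ + δ n * C := by
          rw [norm_smul, Real.norm_eq_abs, abs_of_nonneg (hδ n).1]
          exact add_le_add (le_refl _) (mul_le_mul_of_nonneg_left (hC n) (hδ n).1)
  have hlim : Tendsto (fun n => ‖x (n + 1) - x n‖ + δ n * C) atTop (nhds 0) := by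
    have := h1.add (hδ0.mul_const C)
    simpa using this
  exact squeeze_zero (fun n => norm_nonneg _) hbound hlim
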